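/- For all finite graphs G and H, the Grundy number of the lexicographic product satisfies Γ(G[H]) ≥ Γ(G) · Γ(H). -/

import Mathlib

open SimpleGraph

/-- A greedy `k`-coloring of `G`: a partition of the vertex set into nonempty stable sets
`S 0, …, S (k-1)` such that for all `j < i`, every vertex of `S i` has a neighbor in `S j`. -/
def IsGreedyColoring {V : Type*} (G : SimpleGraph V) (k : ℕ) (S : Fin k → Set V) : Prop :=
  (∀ v : V, ∃! i, v ∈ S i) ∧
  (∀ i, (S i).Nonempty) ∧
  (∀ i, ∀ v ∈ S i, ∀ w ∈ S i, ¬ G.Adj v w) ∧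
  (∀ i j : Fin k, j < i → ∀ v ∈ S i, ∃ w ∈ S j, G.Adj v w)

/-- The Grundy number `Γ(G)`: the largest `k` such that `G` has a greedy `k`-coloring. -/
noncomputable def grundy {V : Type*} [Fintype V] (G : SimpleGraph V) : ℕ :=
  sSup {k | ∃ S : Fin k → Set V, IsGreedyColoring G k S}

/-- Lexicographic product `G[H]`: `(a,x)` adjacent to `(b,y)` iff `ab ∈ E(G)`,
or `a = b` and `xy ∈ E(H)`. -/
def lexProd {α β : Type*} (G : SimpleGraph α) (H : SimpleGraph β) :
    SimpleGraph (α × β) where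
  Adj x y := G.Adj x.1 y.1 ∨ (x.1 = y.1 ∧ H.Adj x.2 y.2)
  symm := ⟨fun _ _ h => by
    rcases h with h | ⟨h1, h2⟩
    · exact Or.inl h.symm
    · exact Or.inr ⟨h1.symm, h2.symm⟩⟩
  loopless := ⟨fun _ h => by
    rcases h with h | ⟨-, h2⟩
    · exact G.irrefl h
    · exact H.irrefl h2⟩

lemma greedy_bddAbove {V : Type*} [Fintype V] (G : SimpleGraph V) :
    BddAbove {k | ∃ S : Fin k → Set V, IsGreedyColoring G k S} := by
  refine ⟨Fintype.card V, ?_⟩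
  rintro k ⟨S, h1, h2, -, -⟩
  choose f hfmem using h2
  have hinj : Function.Injective f := by
    intro i j hij
    obtain ⟨c, hc, hu⟩ := h1 (f i)
    rw [hu i (hfmem i), hu j (hij ▸ hfmem j)]
  calc k = Fintype.card (Fin k) := (Fintype.card_fin k).symm
    _ ≤ Fintype.card V := Fintype.card_le_of_injective f hinj

lemma isGreedy_lexProd {α β : Type*} (G : SimpleGraph α) (H : SimpleGraph β)
    {k l : ℕ} {S : Fin k → Set α} {T : Fin l → Set β}
    (hS : IsGreedyColoring G k S) (hT : IsGreedyColoring H l T) :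
    IsGreedyColoring (lexProd G H) (k * l)
      (fun c => {p : α × β | p.1 ∈ S c.divNat ∧ p.2 ∈ T c.modNat}) := by
  obtain ⟨hS1, hS2, hS3, hS4⟩ := hS
  obtain ⟨hT1, hT2, hT3, hT4⟩ := hT
  refine ⟨?_, ?_, ?_, ?_⟩
  · rintro ⟨a, x⟩
    obtain ⟨i, hi, hiu⟩ := hS1 a
    obtain ⟨j, hj, hju⟩ := hT1 x
    have hl : 0 < l := j.pos
    have hlt : (j : ℕ) + (i : ℕ) * l < k * l := by
      have h1 : (j : ℕ) + (i : ℕ) * l < ((i : ℕ) + 1) * l := by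
        rw [add_mul, one_mul]; omega
      have h2 : ((i : ℕ) + 1) * l ≤ k * l := Nat.mul_le_mul_right l i.is_lt
      omega
    set c : Fin (k * l) := ⟨(j : ℕ) + (i : ℕ) * l, hlt⟩ with hc
    have hdiv : c.divNat = i := by
      apply Fin.ext
      show ((j : ℕ) + (i : ℕ) * l) / l = (i : ℕ)
      rw [Nat.add_mul_div_right _ _ hl, Nat.div_eq_of_lt j.is_lt, Nat.zero_add]
    have hmod : c.modNat = j := by
      apply Fin.ext
      show ((j : ℕ) + (i : ℕ) * l) % l = (j : ℕ)
      rw [Nat.add_mul_mod_self_right, Nat.mod_eq_of_lt j.is_lt]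
    refine ⟨c, ⟨by rw [hdiv]; exact hi, by rw [hmod]; exact hj⟩, ?_⟩
    rintro c' ⟨ha', hx'⟩
    have e1 : c'.divNat = i := hiu _ ha'
    have e2 : c'.modNat = j := hju _ hx'
    have e1' : (c' : ℕ) / l = (i : ℕ) := congrArg Fin.val e1
    have e2' : (c' : ℕ) % l = (j : ℕ) := congrArg Fin.val e2
    apply Fin.ext
    show (c' : ℕ) = (j : ℕ) + (i : ℕ) * l
    conv_lhs => rw [← Nat.mod_add_div' (c' : ℕ) l]
    rw [e1', e2']
  · intro c
    obtain ⟨a, ha⟩ := hS2 c.divNat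
    obtain ⟨x, hx⟩ := hT2 c.modNat
    exact ⟨(a, x), ha, hx⟩
  · rintro c ⟨a, x⟩ ⟨ha, hx⟩ ⟨b, y⟩ ⟨hb, hy⟩ hadj
    rcases hadj with h | ⟨-, h⟩
    · exact hS3 _ a ha b hb h
    · exact hT3 _ x hx y hy h
  · rintro c c' hlt' ⟨a, x⟩ ⟨ha, hx⟩
    have hvlt : (c' : ℕ) < (c : ℕ) := hlt'
    have hdle : (c' : ℕ) / l ≤ (c : ℕ) / l := Nat.div_le_div_right hvlt.le
    rcases lt_or_eq_of_le hdle with hdlt | hdeq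
    · have hfin : c'.divNat < c.divNat := hdlt
      obtain ⟨b, hb, hab⟩ := hS4 c.divNat c'.divNat hfin a ha
      obtain ⟨y, hy⟩ := hT2 c'.modNat
      exact ⟨(b, y), ⟨hb, hy⟩, Or.inl hab⟩
    · have h1 := Nat.mod_add_div' (c' : ℕ) l
      have h2 := Nat.mod_add_div' (c : ℕ) l
      rw [hdeq] at h1
      have hmlt : (c' : ℕ) % l < (c : ℕ) % l := by linarith
      have hfin : c'.modNat < c.modNat := hmlt
      obtain ⟨y, hy, hxy⟩ := hT4 c.modNat c'.modNat hfin x hx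
      have hde : c'.divNat = c.divNat := Fin.ext hdeq
      refine ⟨(a, y), ⟨?_, hy⟩, Or.inr ⟨rfl, hxy⟩⟩
      rw [hde]; exact ha

/-- For all finite graphs `G` and `H`, `Γ(G[H]) ≥ Γ(G) · Γ(H)`. -/
theorem grundy_lexProd_ge {α β : Type*} [Fintype α] [Fintype β]
    (G : SimpleGraph α) (H : SimpleGraph β) :
    grundy (lexProd G H) ≥ grundy G * grundy H := by
  by_cases hG : {k | ∃ S : Fin k → Set α, IsGreedyColoring G k S}.Nonempty
  · by_cases hH : {k | ∃ S : Fin k → Set β, IsGreedyColoring H k S}.Nonempty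
    · have hkG : grundy G ∈ {k | ∃ S : Fin k → Set α, IsGreedyColoring G k S} :=
        Nat.sSup_mem hG (greedy_bddAbove G)
      have hkH : grundy H ∈ {k | ∃ S : Fin k → Set β, IsGreedyColoring H k S} :=
        Nat.sSup_mem hH (greedy_bddAbove H)
      obtain ⟨S, hS⟩ := hkG
      obtain ⟨T, hT⟩ := hkH
      exact le_csSup (greedy_bddAbove (lexProd G H))
        ⟨_, isGreedy_lexProd G H hS hT⟩
    · rw [show grundy H = 0 from by
        rw [grundy, Set.not_nonempty_iff_eq_empty.mp hH]; exact csSup_empty,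
        Nat.mul_zero]
      exact Nat.zero_le _
  · rw [show grundy G = 0 from by
      rw [grundy, Set.not_nonempty_iff_eq_empty.mp hG]; exact csSup_empty,
      Nat.zero_mul]
    exact Nat.zero_le _
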